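/- arXiv:1308.4186 — 2 statements merged into one kernel-verified Lean document; each statement's English description precedes it below -/
import Mathlib

section
/- Let E be a real inner product space (e.g. Euclidean 3-space). Let P, Q ∈ E, set m := dist P Q, and let ε > 0 satisfy 2ε < m. If p, q ∈ E satisfy dist p P ≤ ε and dist q Q ≤ ε, then the angle θ between the vectors q − p and Q − P satisfies sin θ ≤ 2ε/(m − 2ε); equivalently, θ ≤ arcsin(2ε/(m − 2ε)). (This is the precise form of the lemma: a line piercing two balls of radius ε whose centers are at distance m can deviate angularly from the line connecting the centers by at most an angle that is approximately 2ε/m for small ε.) -/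
open InnerProductGeometry
open scoped RealInnerProductSpace

/-- A line piercing two balls of radius `ε` whose centers `P, Q` are at distance `m > 2ε`
can deviate angularly from the line connecting the centers by at most
`arcsin (2ε / (m - 2ε))`. -/
theorem two_disk_angular_deviation {E : Type*} [NormedAddCommGroup E] [InnerProductSpace ℝ E]
    (P Q p q : E) (ε : ℝ) (hε : 0 < ε) (hm : 2 * ε < dist P Q)
    (hp : dist p P ≤ ε) (hq : dist q Q ≤ ε) :
    Real.sin (angle (q - p) (Q - P)) ≤ 2 * ε / (dist P Q - 2 * ε) ∧
      angle (q - p) (Q - P) ≤ Real.arcsin (2 * ε / (dist P Q - 2 * ε)) := by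
  set u := q - p with hu
  set w := Q - P with hwdef
  set d := u - w with hddef
  have hw : ‖w‖ = dist P Q := by rw [dist_comm, dist_eq_norm]
  have hwpos : 0 < ‖w‖ := by rw [hw]; linarith [hε.le]
  have hd : ‖d‖ ≤ 2 * ε := by
    have : d = (q - Q) - (p - P) := by simp [hddef, hu, hwdef]; abel
    rw [this]
    calc ‖(q - Q) - (p - P)‖ ≤ ‖q - Q‖ + ‖p - P‖ := norm_sub_le _ _
    _ ≤ ε + ε := by
        rw [← dist_eq_norm, ← dist_eq_norm]; exact add_le_add hq hp
    _ = 2 * ε := by ring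
  have hupos : dist P Q - 2 * ε ≤ ‖u‖ := by
    have h1 : ‖w‖ - ‖d‖ ≤ ‖u‖ := by
      have := norm_sub_norm_le w u
      have : ‖w - u‖ = ‖d‖ := by rw [hddef, ← norm_neg]; congr 1; abel
      linarith [norm_sub_norm_le w u, this.ge, this.le]
    linarith [hw.le, hw.ge]
  have hupos' : 0 < ‖u‖ := lt_of_lt_of_le (by linarith) hupos
  -- key inner product identity
  have key : ⟪u, u⟫ * ⟪w, w⟫ - ⟪u, w⟫ * ⟪u, w⟫
      = ‖d‖ ^ 2 * ‖w‖ ^ 2 - ⟪d, w⟫ * ⟪d, w⟫ := by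
    have hud : u = w + d := by rw [hddef]; abel
    rw [hud]
    simp only [inner_add_left, inner_add_right, real_inner_comm d w,
      real_inner_self_eq_norm_sq]
    ring
  have hsin_nonneg : 0 ≤ Real.sin (angle u w) :=
    Real.sin_nonneg_of_nonneg_of_le_pi (angle_nonneg u w) (angle_le_pi u w)
  have hsinb : Real.sin (angle u w) * ‖u‖ ≤ ‖d‖ := by
    have h1 := sin_angle_mul_norm_mul_norm u w
    rw [key] at h1
    have h2 : Real.sqrt (‖d‖ ^ 2 * ‖w‖ ^ 2 - ⟪d, w⟫ * ⟪d, w⟫) ≤ ‖d‖ * ‖w‖ := by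
      calc Real.sqrt (‖d‖ ^ 2 * ‖w‖ ^ 2 - ⟪d, w⟫ * ⟪d, w⟫)
          ≤ Real.sqrt ((‖d‖ * ‖w‖) ^ 2) := by
            apply Real.sqrt_le_sqrt; nlinarith [mul_self_nonneg (⟪d, w⟫)]
        _ = ‖d‖ * ‖w‖ := Real.sqrt_sq (by positivity)
    have h3 : Real.sin (angle u w) * (‖u‖ * ‖w‖) ≤ ‖d‖ * ‖w‖ := by rw [h1]; exact h2
    have := (mul_le_mul_iff_of_pos_right hwpos).mp (by linarith [h3] : Real.sin (angle u w) * ‖u‖ * ‖w‖ ≤ ‖d‖ * ‖w‖)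
    exact this
  have hmeps : 0 < dist P Q - 2 * ε := by linarith
  have hsin : Real.sin (angle u w) ≤ 2 * ε / (dist P Q - 2 * ε) := by
    rw [le_div_iff₀ hmeps]
    calc Real.sin (angle u w) * (dist P Q - 2 * ε)
        ≤ Real.sin (angle u w) * ‖u‖ := by
          apply mul_le_mul_of_nonneg_left hupos hsin_nonneg
      _ ≤ ‖d‖ := hsinb
      _ ≤ 2 * ε := hd
  refine ⟨hsin, ?_⟩
  -- angle ≤ Real.pi/2 since inner product is positive
  have hinner : 0 < ⟪u, w⟫ := by
    have hud : u = w + d := by rw [hddef]; abel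
    have habs : |⟪d, w⟫| ≤ ‖d‖ * ‖w‖ := abs_real_inner_le_norm d w
    have : ⟪u, w⟫ = ‖w‖ ^ 2 + ⟪d, w⟫ := by
      rw [hud, inner_add_left, real_inner_self_eq_norm_sq]
    rw [this]
    have h1 : -(‖d‖ * ‖w‖) ≤ ⟪d, w⟫ := neg_le_of_abs_le habs
    nlinarith [hw.ge, hw.le]
  have hcos : 0 < Real.cos (angle u w) := by
    rw [cos_angle]; positivity
  have hle : angle u w ≤ Real.pi / 2 := by
    by_contra h
    push_neg at h
    have : Real.cos (angle u w) < 0 :=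
      Real.cos_neg_of_pi_div_two_lt_of_lt h
        (lt_of_le_of_lt (angle_le_pi u w) (by linarith [Real.pi_pos]))
    linarith
  calc angle u w = Real.arcsin (Real.sin (angle u w)) := by
        rw [Real.arcsin_sin (by linarith [angle_nonneg u w, Real.pi_pos]) hle]
    _ ≤ Real.arcsin (2 * ε / (dist P Q - 2 * ε)) := Real.monotone_arcsin hsin
end

section
/- (Lower bound of Lemma 2.) In the Euclidean plane, let A ≠ B and let s be the line through A and B (the affine span of {A, B}). Let O be a point not on s and set h := infDist O s. Let 0 < ε < h, let p be a point with dist p O ≤ ε, let a be a point such that a and O lie strictly on opposite sides of s, and let v be a point such that p lies on the segment from v to a. Then infDist v s ≥ h − ε. (In the interlocking construction: if a link va of the 2-chain crosses the line AB of the triangle frame and passes through the ε-ball at the bottom corner O, then the apex v stays at distance at least h − ε from the line AB.) -/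
open Metric EuclideanGeometry RealInnerProductSpace

/-- Lower bound of Lemma 2: if the link `va` of the 2-chain crosses the line `AB`
(from the side opposite to `O`) and passes through the `ε`-ball at the bottom corner `O`,
then the apex `v` stays at distance at least `h - ε` from the line `AB`. -/
theorem apex_distance_lower_bound (A B O p a v : EuclideanSpace ℝ (Fin 2)) (hAB : A ≠ B)
    (hO : O ∉ affineSpan ℝ {A, B}) (ε : ℝ) (hε : 0 < ε)
    (hεh : ε < Metric.infDist O (affineSpan ℝ {A, B} : Set (EuclideanSpace ℝ (Fin 2))))
    (hp : dist p O ≤ ε)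
    (hside : (affineSpan ℝ {A, B}).SOppSide a O)
    (hseg : p ∈ segment ℝ v a) :
    Metric.infDist v (affineSpan ℝ {A, B} : Set (EuclideanSpace ℝ (Fin 2))) ≥
      Metric.infDist O (affineSpan ℝ {A, B} : Set (EuclideanSpace ℝ (Fin 2))) - ε := by
  set s : AffineSubspace ℝ (EuclideanSpace ℝ (Fin 2)) := affineSpan ℝ {A, B} with hs
  have hAmem : A ∈ s := mem_affineSpan ℝ (by simp)
  haveI : Nonempty s := ⟨⟨A, hAmem⟩⟩
  set E : EuclideanSpace ℝ (Fin 2) := (EuclideanGeometry.orthogonalProjection s O : EuclideanSpace ℝ (Fin 2)) with hE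
  have hEmem : E ∈ s := (EuclideanGeometry.orthogonalProjection s O).2
  set n : EuclideanSpace ℝ (Fin 2) := O - E with hn
  have hnorth : n ∈ s.directionᗮ := by
    simpa [hn, vsub_eq_sub] using vsub_orthogonalProjection_mem_direction_orthogonal s O
  have hinner0 : ∀ w ∈ s, ∀ w' ∈ s, ⟪w - w', n⟫ = 0 := by
    intro w hw w' hw'
    have hd : w - w' ∈ s.direction := by
      simpa [vsub_eq_sub] using AffineSubspace.vsub_mem_direction hw hw'
    rw [real_inner_comm]
    exact (Submodule.mem_orthogonal' s.direction n).mp hnorth _ hd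
  -- h = ‖n‖
  set h : ℝ := Metric.infDist O (s : Set (EuclideanSpace ℝ (Fin 2))) with hh
  have hOE : h = ‖n‖ := by
    have hle : h ≤ dist O E := Metric.infDist_le_dist_of_mem hEmem
    have hge : dist O E ≤ h := by
      rw [hh, Metric.infDist_eq_iInf]
      refine le_ciInf fun w => ?_
      have hpyth := dist_sq_eq_dist_orthogonalProjection_sq_add_dist_orthogonalProjection_sq
        (s := s) O w.2
      have h2 : (0:ℝ) ≤ dist O E := dist_nonneg
      have h3 : (0:ℝ) ≤ dist O (w : EuclideanSpace ℝ (Fin 2)) := dist_nonneg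
      rw [← hE] at hpyth
      nlinarith [hpyth, dist_comm O (w : EuclideanSpace ℝ (Fin 2)), dist_nonneg (x := (w : EuclideanSpace ℝ (Fin 2))) (y := E)]
    have : dist O E = ‖n‖ := by rw [hn, dist_eq_norm]
    linarith
  have hnpos : 0 < ‖n‖ := by rw [← hOE]; linarith
  have hfO : ⟪O - E, n⟫ = ‖n‖ ^ 2 := by rw [← hn, real_inner_self_eq_norm_sq]
  -- f a ≤ 0
  have hfa : ⟪a - E, n⟫ ≤ 0 := by
    obtain ⟨p₁, hp₁, p₂, hp₂, hray⟩ := hside.1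
    have hfa1 : ⟪a - E, n⟫ = ⟪a - p₁, n⟫ := by
      have hsplit : a - E = (a - p₁) + (p₁ - E) := by abel
      rw [hsplit, inner_add_left, hinner0 p₁ hp₁ E hEmem, add_zero]
    rw [hfa1]
    have hnz : p₂ -ᵥ O ≠ 0 := by
      intro hzero
      apply hside.2.2
      have : p₂ = O := by simpa [vsub_eq_sub, sub_eq_zero] using hzero
      rwa [← this]
    obtain ⟨r, hr, hra⟩ := hray.exists_nonneg_right hnz
    have hva : a - p₁ = r • (p₂ - O) := by
      simpa [vsub_eq_sub] using hra
    have hpO : ⟪p₂ - O, n⟫ = -‖n‖ ^ 2 := by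
      have hsplit : p₂ - O = (p₂ - E) - (O - E) := by abel
      rw [hsplit, inner_sub_left, hinner0 p₂ hp₂ E hEmem, hfO]
      ring
    rw [hva, real_inner_smul_left, hpO]
    nlinarith
  -- f p ≥ (h - ε) * ‖n‖
  have hfp : (h - ε) * ‖n‖ ≤ ⟪p - E, n⟫ := by
    have hsplit : p - E = (O - E) + (p - O) := by abel
    have hlb : -(‖p - O‖ * ‖n‖) ≤ ⟪p - O, n⟫ := by
      have := abs_real_inner_le_norm (p - O) n
      cases abs_le.mp this with
      | intro hl hr => linarith
    have hpO' : ‖p - O‖ ≤ ε := by rwa [← dist_eq_norm]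
    rw [hsplit, inner_add_left, hfO]
    nlinarith
  -- f p = t * f v + u * f a
  obtain ⟨t, u, ht, hu, htu, hteq⟩ := hseg
  have hfcomb : ⟪p - E, n⟫ = t * ⟪v - E, n⟫ + u * ⟪a - E, n⟫ := by
    have hsplit : p - E = t • (v - E) + u • (a - E) := by
      rw [← hteq, smul_sub, smul_sub]
      have hE1 : t • E + u • E = E := by
        rw [← add_smul, htu, one_smul]
      have h2 : (t • v - t • E) + (u • a - u • E) = t • v + u • a - (t • E + u • E) := by
        abel
      rw [h2, hE1]
    rw [hsplit, inner_add_left, real_inner_smul_left, real_inner_smul_left]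
  -- f v ≥ (h-ε)‖n‖
  have hfv : (h - ε) * ‖n‖ ≤ ⟪v - E, n⟫ := by
    have hpos : 0 < (h - ε) * ‖n‖ := by
      apply mul_pos (by linarith) hnpos
    have h1 : (h - ε) * ‖n‖ ≤ t * ⟪v - E, n⟫ := by
      nlinarith [mul_nonneg hu (neg_nonneg.mpr hfa)]
    have hfvpos : 0 < ⟪v - E, n⟫ := by nlinarith
    have h2 : t * ⟪v - E, n⟫ ≤ ⟪v - E, n⟫ :=
      mul_le_of_le_one_left hfvpos.le (by linarith)
    linarith
  -- conclude
  rw [Metric.infDist_eq_iInf]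
  refine le_ciInf fun w => ?_
  have hle : ⟪v - E, n⟫ ≤ dist v (w : EuclideanSpace ℝ (Fin 2)) * ‖n‖ := by
    have hsplit : v - E = (v - w) + ((w : EuclideanSpace ℝ (Fin 2)) - E) := by abel
    have := real_inner_le_norm (v - (w : EuclideanSpace ℝ (Fin 2))) n
    rw [hsplit, inner_add_left, hinner0 w w.2 E hEmem, add_zero, dist_eq_norm]
    linarith
  have := hfv.trans hle
  exact le_of_mul_le_mul_right this hnpos
end
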